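/- Let R be a ring with identity and a nontrivial idempotent e, let g : R → R satisfy Assumption A, and let d : R → R be a multiplicative skew semi-derivation with associated map g and automorphism α. Then for all a₁₁ ∈ R₁₁, a₁₂ ∈ R₁₂, a₂₁ ∈ R₂₁, a₂₂ ∈ R₂₂: d(a₁₁ + a₁₂ + a₂₁ + a₂₂) = d(a₁₁) + d(a₁₂) + d(a₂₁) + d(a₂₂). -/

import Mathlib

/-- `pel e 0 = e₁ = e`, `pel e 1 = e₂ = 1 - e`. -/
def pel {R : Type*} [Ring R] (e : R) : Fin 2 → R := fun i => if i = 0 then e else 1 - e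

/-- The Peirce component `R_ij = e_i R e_j`. -/
def peirceSet {R : Type*} [Ring R] (e : R) (i j : Fin 2) : Set R :=
  {x | ∃ r : R, x = pel e i * r * pel e j}

/-- A multiplicative skew semi-derivation `d` with associated map `g` and automorphism `α`. -/
def IsMultSkewSemiDeriv {R : Type*} [Ring R] (d g : R → R) (α : R ≃+* R) : Prop :=
  (∀ x y : R, d (x * y) = d x * g y + α x * d y) ∧
  (∀ x y : R, d (x * y) = d x * α y + g x * d y) ∧
  (∀ x : R, d (g x) = g (d x))

/-- A multiplicative generalized skew semi-derivation `f` with associated map `g`,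
multiplicative skew semi-derivation `d` and automorphism `α`. -/
def IsMultGenSkewSemiDeriv {R : Type*} [Ring R] (f d g : R → R) (α : R ≃+* R) : Prop :=
  (∀ x y : R, f (x * y) = f x * g y + α x * d y) ∧
  (∀ x y : R, f (x * y) = d x * α y + g x * f y) ∧
  (∀ x : R, f (g x) = g (f x))

/-- Assumption A on the map `g`. -/
def AssumptionA {R : Type*} [Ring R] (e : R) (g : R → R) : Prop :=
  g 0 = 0 ∧
  (∀ i j k : Fin 2, i ≤ j →
    ∀ a ∈ peirceSet e k 0, ∀ b ∈ peirceSet e k 1,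
      (∀ x ∈ peirceSet e i j, (a + b) * g x = 0) →
      (i = 0 → a = 0) ∧ (i = 1 → b = 0)) ∧
  (∀ i j : Fin 2,
    ∀ a ∈ peirceSet e 0 j, ∀ b ∈ peirceSet e 1 j,
      (∀ x ∈ peirceSet e i i, g x * (a + b) = 0) →
      (i = 0 → a = 0) ∧ (i = 1 → b = 0)) ∧
  (∀ a ∈ peirceSet e 0 0, ∀ b ∈ peirceSet e 0 1, g (a + b) = g a + g b) ∧
  (∀ a ∈ peirceSet e 0 0, ∀ b ∈ peirceSet e 1 0, g (a + b) = g a + g b)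

/-- Assumption B on the map `g`. -/
def AssumptionB {R : Type*} [Ring R] (e : R) (g : R → R) : Prop :=
  g 0 = 0 ∧
  (∀ i j : Fin 2,
    ∀ a ∈ peirceSet e j 0, ∀ b ∈ peirceSet e j 1,
      (∀ x ∈ peirceSet e i i, (a + b) * g x = 0) → a + b = 0) ∧
  (∀ i : Fin 2,
    ∀ a ∈ peirceSet e 0 0, ∀ c ∈ peirceSet e 1 0,
      (∀ x ∈ peirceSet e i i, g x * (a + c) = 0) → a + c = 0)

section Aux

variable {R : Type*} [Ring R]

lemma pel_mul (e : R) (he : e * e = e) (i j : Fin 2) :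
    pel e i * pel e j = if i = j then pel e i else 0 := by
  have h1 : e * (1 - e) = 0 := by rw [mul_sub, mul_one, he, sub_self]
  have h2 : (1 - e) * e = 0 := by rw [sub_mul, one_mul, he, sub_self]
  have h3 : (1 - e) * (1 - e) = 1 - e := by
    rw [mul_sub, mul_one, sub_mul, one_mul, he, sub_self, sub_zero]
  fin_cases i <;> fin_cases j <;> simp [pel, he, h1, h2, h3]

lemma pel_sum (e : R) : pel e 0 + pel e 1 = 1 := by simp [pel]

lemma peirce_mul_zero (e : R) (he : e * e = e) {i j k l : Fin 2} (hjk : j ≠ k)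
    {a b : R} (ha : a ∈ peirceSet e i j) (hb : b ∈ peirceSet e k l) : a * b = 0 := by
  obtain ⟨r, rfl⟩ := ha
  obtain ⟨s, rfl⟩ := hb
  have h0 : pel e j * pel e k = 0 := by rw [pel_mul e he, if_neg hjk]
  calc pel e i * r * pel e j * (pel e k * s * pel e l)
      = pel e i * r * (pel e j * pel e k) * (s * pel e l) := by noncomm_ring
    _ = 0 := by rw [h0, mul_zero, zero_mul]

lemma peirce_mul_mem (e : R) (he : e * e = e) {i j l : Fin 2}
    {a b : R} (ha : a ∈ peirceSet e i j) (hb : b ∈ peirceSet e j l) :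
    a * b ∈ peirceSet e i l := by
  obtain ⟨r, rfl⟩ := ha
  obtain ⟨s, rfl⟩ := hb
  have h0 : pel e j * pel e j = pel e j := by rw [pel_mul e he, if_pos rfl]
  refine ⟨r * pel e j * s, ?_⟩
  calc pel e i * r * pel e j * (pel e j * s * pel e l)
      = pel e i * r * (pel e j * pel e j) * (s * pel e l) := by noncomm_ring
    _ = pel e i * r * pel e j * (s * pel e l) := by rw [h0]
    _ = pel e i * (r * pel e j * s) * pel e l := by noncomm_ring

/-- Right cancellation lemma from Assumption A (i). -/
lemma cancel_right (e : R) (g : R → R) (hg : AssumptionA e g) (T : R)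
    (h1 : ∀ x ∈ peirceSet e 0 1, T * g x = 0)
    (h2 : ∀ x ∈ peirceSet e 1 1, T * g x = 0) : T = 0 := by
  obtain ⟨-, hA1, -, -, -⟩ := hg
  have key : ∀ (k i j : Fin 2), i ≤ j → (∀ x ∈ peirceSet e i j, T * g x = 0) →
      (i = 0 → pel e k * T * pel e 0 = 0) ∧ (i = 1 → pel e k * T * pel e 1 = 0) := by
    intro k i j hij hx
    apply hA1 i j k hij _ ⟨T, rfl⟩ _ ⟨T, rfl⟩
    intro x hxm
    have hsum : pel e k * T * pel e 0 + pel e k * T * pel e 1 = pel e k * T := by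
      rw [← mul_add, pel_sum, mul_one]
    rw [hsum, mul_assoc, hx x hxm, mul_zero]
  have c0 : ∀ k, pel e k * T * pel e 0 = 0 := fun k => (key k 0 1 (by decide) h1).1 rfl
  have c1 : ∀ k, pel e k * T * pel e 1 = 0 := fun k => (key k 1 1 (le_refl _) h2).2 rfl
  have expand : T = pel e 0 * T * pel e 0 + pel e 0 * T * pel e 1
      + pel e 1 * T * pel e 0 + pel e 1 * T * pel e 1 := by
    calc T = 1 * T * 1 := by rw [one_mul, mul_one]
      _ = (pel e 0 + pel e 1) * T * (pel e 0 + pel e 1) := by rw [pel_sum]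
      _ = _ := by noncomm_ring
  rw [c0 0, c0 1, c1 0, c1 1] at expand
  simpa using expand

/-- Left cancellation lemma from Assumption A (ii). -/
lemma cancel_left (e : R) (g : R → R) (hg : AssumptionA e g) (T : R)
    (h1 : ∀ x ∈ peirceSet e 0 0, g x * T = 0)
    (h2 : ∀ x ∈ peirceSet e 1 1, g x * T = 0) : T = 0 := by
  obtain ⟨-, -, hA2, -, -⟩ := hg
  have key : ∀ (i j : Fin 2), (∀ x ∈ peirceSet e i i, g x * T = 0) →
      (i = 0 → pel e 0 * T * pel e j = 0) ∧ (i = 1 → pel e 1 * T * pel e j = 0) := by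
    intro i j hx
    apply hA2 i j _ ⟨T, rfl⟩ _ ⟨T, rfl⟩
    intro x hxm
    have hsum : pel e 0 * T * pel e j + pel e 1 * T * pel e j = T * pel e j := by
      rw [← add_mul, ← add_mul, pel_sum, one_mul]
    rw [hsum, ← mul_assoc, hx x hxm, zero_mul]
  have c0 : ∀ j, pel e 0 * T * pel e j = 0 := fun j => (key 0 j h1).1 rfl
  have c1 : ∀ j, pel e 1 * T * pel e j = 0 := fun j => (key 1 j h2).2 rfl
  have expand : T = pel e 0 * T * pel e 0 + pel e 0 * T * pel e 1
      + pel e 1 * T * pel e 0 + pel e 1 * T * pel e 1 := by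
    calc T = 1 * T * 1 := by rw [one_mul, mul_one]
      _ = (pel e 0 + pel e 1) * T * (pel e 0 + pel e 1) := by rw [pel_sum]
      _ = _ := by noncomm_ring
  rw [c0 0, c0 1, c1 0, c1 1] at expand
  simpa using expand

lemma skewDeriv_zero (g : R → R) (hg0 : g 0 = 0) (α : R ≃+* R) (d : R → R)
    (hd : IsMultSkewSemiDeriv d g α) : d 0 = 0 := by
  have h := hd.1 0 0
  rw [mul_zero, hg0, map_zero, mul_zero, zero_mul, add_zero] at h
  exact h

/-- d is additive on R₁₂ + R₂₂. -/
lemma claimC (e : R) (he : e * e = e) (g : R → R) (hg : AssumptionA e g)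
    (α : R ≃+* R) (d : R → R) (hd : IsMultSkewSemiDeriv d g α) :
    ∀ b ∈ peirceSet e 0 1, ∀ f ∈ peirceSet e 1 1, d (b + f) = d b + d f := by
  intro b hb f hf
  have d0 : d 0 = 0 := skewDeriv_zero g hg.1 α d hd
  have h1 : ∀ x ∈ peirceSet e 0 0, g x * (d (b + f) - (d b + d f)) = 0 := by
    intro x hx
    have hz : x * f = 0 := peirce_mul_zero e he (by decide) hx hf
    have hxs : x * (b + f) = x * b := by rw [mul_add, hz, add_zero]
    have E1 := hd.2.1 x (b + f)
    rw [hxs, map_add] at E1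
    have E2 := hd.2.1 x b
    have E3 := hd.2.1 x f
    rw [hz, d0] at E3
    linear_combination (norm := noncomm_ring) E2 + E3 - E1
  have h2 : ∀ x ∈ peirceSet e 1 1, g x * (d (b + f) - (d b + d f)) = 0 := by
    intro x hx
    have hz : x * b = 0 := peirce_mul_zero e he (by decide) hx hb
    have hxs : x * (b + f) = x * f := by rw [mul_add, hz, zero_add]
    have E1 := hd.2.1 x (b + f)
    rw [hxs, map_add] at E1
    have E2 := hd.2.1 x f
    have E3 := hd.2.1 x b
    rw [hz, d0] at E3
    linear_combination (norm := noncomm_ring) E2 + E3 - E1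
  have := cancel_left e g hg _ h1 h2
  rw [sub_eq_zero] at this
  exact this

end Aux

theorem stmt_5 {R : Type*} [Ring R] (e : R) (he : e * e = e) (he0 : e ≠ 0) (he1 : e ≠ 1)
    (g : R → R) (hg : AssumptionA e g) (α : R ≃+* R) (d : R → R)
    (hd : IsMultSkewSemiDeriv d g α) :
    ∀ a11 ∈ peirceSet e 0 0, ∀ a12 ∈ peirceSet e 0 1, ∀ a21 ∈ peirceSet e 1 0,
      ∀ a22 ∈ peirceSet e 1 1,
        d (a11 + a12 + a21 + a22) = d a11 + d a12 + d a21 + d a22 := by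
  intro a11 ha11 a12 ha12 a21 ha21 a22 ha22
  have d0 : d 0 = 0 := skewDeriv_zero g hg.1 α d hd
  set s := a11 + a12 + a21 + a22 with hs
  have h1 : ∀ x ∈ peirceSet e 0 1,
      (d s - (d a11 + d a12 + d a21 + d a22)) * g x = 0 := by
    intro x hx
    have hz12 : a12 * x = 0 := peirce_mul_zero e he (by decide) ha12 hx
    have hz22 : a22 * x = 0 := peirce_mul_zero e he (by decide) ha22 hx
    have hm11 : a11 * x ∈ peirceSet e 0 1 := peirce_mul_mem e he ha11 hx
    have hm21 : a21 * x ∈ peirceSet e 1 1 := peirce_mul_mem e he ha21 hx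
    have hsx : s * x = a11 * x + a21 * x := by
      rw [hs, add_mul, add_mul, add_mul, hz12, hz22, add_zero, add_zero]
    have E1 := hd.1 s x
    rw [hsx, claimC e he g hg α d hd _ hm11 _ hm21, hs, map_add, map_add, map_add] at E1
    have E2 := hd.1 a11 x
    have E4 := hd.1 a21 x
    have E3 := hd.1 a12 x
    rw [hz12, d0] at E3
    have E5 := hd.1 a22 x
    rw [hz22, d0] at E5
    rw [E2, E4] at E1
    linear_combination (norm := noncomm_ring) E3 + E5 - E1
  have h2 : ∀ x ∈ peirceSet e 1 1,
      (d s - (d a11 + d a12 + d a21 + d a22)) * g x = 0 := by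
    intro x hx
    have hz11 : a11 * x = 0 := peirce_mul_zero e he (by decide) ha11 hx
    have hz21 : a21 * x = 0 := peirce_mul_zero e he (by decide) ha21 hx
    have hm12 : a12 * x ∈ peirceSet e 0 1 := peirce_mul_mem e he ha12 hx
    have hm22 : a22 * x ∈ peirceSet e 1 1 := peirce_mul_mem e he ha22 hx
    have hsx : s * x = a12 * x + a22 * x := by
      rw [hs, add_mul, add_mul, add_mul, hz11, hz21, zero_add, add_zero]
    have E1 := hd.1 s x
    rw [hsx, claimC e he g hg α d hd _ hm12 _ hm22, hs, map_add, map_add, map_add] at E1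
    have E2 := hd.1 a12 x
    have E4 := hd.1 a22 x
    have E3 := hd.1 a11 x
    rw [hz11, d0] at E3
    have E5 := hd.1 a21 x
    rw [hz21, d0] at E5
    rw [E2, E4] at E1
    linear_combination (norm := noncomm_ring) E3 + E5 - E1
  have hT := cancel_right e g hg _ h1 h2
  rw [sub_eq_zero] at hT
  exact hT
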